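/- Conversely, if π is a policy for a finite FOND state model such that π is defined and applicable at every π-reachable non-goal state, and every fair infinite π-trajectory from s₀ reaches a goal state, then π is a strong cyclic solution. -/

import Mathlib

/-- One step of the execution of policy `π` in a FOND state model with applicable-action
map `A`, non-deterministic transition function `Fn`: `π s` is defined, applicable in `s`,
and `s'` is a possible successor. -/
def fondStep {S Act : Type*} (A : S → Set Act) (Fn : Act → S → Set S)
    (π : S → Option Act) (s s' : S) : Prop :=
  ∃ a, π s = some a ∧ a ∈ A s ∧ s' ∈ Fn a s

/-- `π` is a strong cyclic solution of the FOND state model `(S, s₀, A, Fn, G)`: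
for every `π`-trajectory from `s₀` to `s` there is a `π`-trajectory from `s` to a goal. -/
def strongCyclic {S Act : Type*} (s₀ : S) (A : S → Set Act) (Fn : Act → S → Set S)
    (G : Set S) (π : S → Option Act) : Prop :=
  ∀ s, Relation.ReflTransGen (fondStep A Fn π) s₀ s →
    ∃ t ∈ G, Relation.ReflTransGen (fondStep A Fn π) s t

open Relation List

attribute [local instance] Classical.propDecidable

section FairTraj

variable {S : Type*} (r : S → S → Prop) (C : Set S)

/-- A chosen `r`-chain from `c` to `u` inside `C`. -/
noncomputable def pathTo (hconn : ∀ u ∈ C, ∀ v ∈ C, ReflTransGen r u v) (c u : S) : List S :=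
  if h : c ∈ C ∧ u ∈ C then
    (List.exists_isChain_cons_of_relationReflTransGen (hconn c h.1 u h.2)).choose
  else []

lemma pathTo_spec (hconn : ∀ u ∈ C, ∀ v ∈ C, ReflTransGen r u v) {c u : S}
    (hc : c ∈ C) (hu : u ∈ C) :
    Chain r c (pathTo r C hconn c u) ∧
      (c :: pathTo r C hconn c u).getLast (cons_ne_nil _ _) = u := by
  rw [pathTo, dif_pos ⟨hc, hu⟩]
  exact (List.exists_isChain_cons_of_relationReflTransGen (hconn c hc u hu)).choose_spec

/-- A chosen `r`-successor of `c` (for `c ∈ C`). -/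
noncomputable def nextState (hsucc : ∀ c ∈ C, ∃ c', r c c') (c : S) : S :=
  if h : c ∈ C then (hsucc c h).choose else c

lemma nextState_spec (hsucc : ∀ c ∈ C, ∃ c', r c c') {c : S} (hc : c ∈ C) :
    r c (nextState r C hsucc c) := by
  rw [nextState, dif_pos hc]; exact (hsucc c hc).choose_spec

lemma chain_append_last {c u v : S} : ∀ (p : List S), Chain r c p →
    (c :: p).getLast (cons_ne_nil _ _) = u → r u v → Chain r c (p ++ [v])
  | [], _, hlast, hr => by
      simp only [getLast_singleton] at hlast
      subst hlast
      simpa [Chain] using hr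
  | x :: t, hch, hlast, hr => by
      rw [Chain, chain_cons] at hch
      rw [getLast_cons_cons] at hlast
      exact List.chain_cons.2 ⟨hch.1, chain_append_last t hch.2 hlast hr⟩

/-- One step of the fair-scheduling machine: state is (current, plan, round). -/
noncomputable def fairStep (f : ℕ → S × S)
    (hconn : ∀ u ∈ C, ∀ v ∈ C, ReflTransGen r u v)
    (hsucc : ∀ c ∈ C, ∃ c', r c c') :
    S × List S × ℕ → S × List S × ℕ
  | (_, x :: rest, j) => (x, rest, j)
  | (c, [], j) =>
    if _ : (f j).1 ∈ C ∧ r (f j).1 (f j).2 ∧ c ∈ C then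
      ((pathTo r C hconn c (f j).1 ++ [(f j).2]).head (by simp),
        (pathTo r C hconn c (f j).1 ++ [(f j).2]).tail, j + 1)
    else (nextState r C hsucc c, [], j + 1)

variable (f : ℕ → S × S) (hconn : ∀ u ∈ C, ∀ v ∈ C, ReflTransGen r u v)
    (hsucc : ∀ c ∈ C, ∃ c', r c c')

lemma fairStep_cons (c x : S) (rest : List S) (j : ℕ) :
    fairStep r C f hconn hsucc (c, x :: rest, j) = (x, rest, j) := rfl

lemma fairStep_nil (c : S) (j : ℕ) :
    fairStep r C f hconn hsucc (c, [], j) =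
      if _ : (f j).1 ∈ C ∧ r (f j).1 (f j).2 ∧ c ∈ C then
        ((pathTo r C hconn c (f j).1 ++ [(f j).2]).head (by simp),
          (pathTo r C hconn c (f j).1 ++ [(f j).2]).tail, j + 1)
      else (nextState r C hsucc c, [], j + 1) := rfl

lemma fairStep_good (hclosed : ∀ u ∈ C, ∀ v, r u v → v ∈ C)
    (st : S × List S × ℕ) (h : st.1 ∈ C ∧ Chain r st.1 st.2.1) :
    ((fairStep r C f hconn hsucc st).1 ∈ C ∧
      Chain r (fairStep r C f hconn hsucc st).1 (fairStep r C f hconn hsucc st).2.1) ∧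
      r st.1 (fairStep r C f hconn hsucc st).1 := by
  obtain ⟨c, plan, j⟩ := st
  obtain ⟨hc, hch⟩ := h
  match plan with
  | x :: rest =>
    rw [fairStep_cons]
    simp only [Chain, chain_cons] at hch
    exact ⟨⟨hclosed c hc x hch.1, hch.2⟩, hch.1⟩
  | [] =>
    show _ ∧ _
    rw [fairStep_nil]
    split
    · rename_i hpos
      obtain ⟨hu, hr, hc'⟩ := hpos
      obtain ⟨hchp, hlast⟩ := pathTo_spec r C hconn hc' hu
      have hq : Chain r c (pathTo r C hconn c (f j).1 ++ [(f j).2]) :=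
        chain_append_last r _ hchp hlast hr
      set q := pathTo r C hconn c (f j).1 ++ [(f j).2] with hqdef
      have hne : q ≠ [] := by simp [hqdef]
      have hqe : q.head hne :: q.tail = q := List.cons_head_tail hne
      rw [← hqe, Chain, chain_cons] at hq
      exact ⟨⟨hclosed c hc _ hq.1, hq.2⟩, hq.1⟩
    · have := nextState_spec r C hsucc hc
      exact ⟨⟨hclosed c hc _ this, List.Chain.nil⟩, this⟩

lemma fairStep_run : ∀ (k : ℕ) (c : S) (plan : List S) (j : ℕ) (hk : k ≤ plan.length),
    (fairStep r C f hconn hsucc)^[k] (c, plan, j) =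
      ((c :: plan)[k]'(by simp; omega), plan.drop k, j)
  | 0, c, plan, j, _ => by simp
  | k + 1, c, plan, j, hk => by
    match plan with
    | [] => simp at hk
    | x :: rest =>
      rw [Function.iterate_succ_apply, fairStep_cons]
      rw [fairStep_run k x rest j (by simpa using hk)]
      simp

end FairTraj

/-- There is a trajectory inside `C` starting at `m` that uses every edge out of `C`
at arbitrarily late times. -/
lemma fair_traj {S : Type*} [Fintype S] (r : S → S → Prop) (C : Set S)
    (hconn : ∀ u ∈ C, ∀ v ∈ C, ReflTransGen r u v)
    (hclosed : ∀ u ∈ C, ∀ v, r u v → v ∈ C)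
    (hsucc : ∀ c ∈ C, ∃ c', r c c') {m : S} (hm : m ∈ C) :
    ∃ τ : ℕ → S, τ 0 = m ∧ (∀ i, r (τ i) (τ (i + 1))) ∧ (∀ i, τ i ∈ C) ∧
      ∀ u v, u ∈ C → r u v → ∀ N, ∃ i, N ≤ i ∧ τ i = u ∧ τ (i + 1) = v := by
  classical
  have : Nonempty S := ⟨m⟩
  set n := Fintype.card (S × S) with hn
  have hn0 : 0 < n := Fintype.card_pos
  set e := Fintype.equivFin (S × S) with he
  set f : ℕ → S × S := fun j => e.symm ⟨j % n, Nat.mod_lt _ hn0⟩ with hf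
  have hfhit : ∀ (p : S × S) (N : ℕ), ∃ j, N ≤ j ∧ f j = p := by
    intro p N
    refine ⟨n * N + (e p).val, ?_, ?_⟩
    · calc N = 1 * N := (one_mul N).symm
        _ ≤ n * N := Nat.mul_le_mul_right N hn0
        _ ≤ _ := Nat.le_add_right _ _
    · have hmod : (n * N + (e p).val) % n = (e p).val := by
        rw [Nat.mul_add_mod]
        exact Nat.mod_eq_of_lt (e p).isLt
      simp only [hf]
      rw [show (⟨(n * N + (e p).val) % n, Nat.mod_lt _ hn0⟩ : Fin n) = e p by
        ext; simpa using hmod]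
      exact e.symm_apply_apply p
  set F := fairStep r C f hconn hsucc with hF
  set aux : ℕ → S × List S × ℕ := fun k => F^[k] (m, [], 0) with haux
  have haux_succ : ∀ k, aux (k + 1) = F (aux k) := by
    intro k; simp only [haux, Function.iterate_succ_apply']
  have hgood : ∀ k, (aux k).1 ∈ C ∧ Chain r (aux k).1 (aux k).2.1 := by
    intro k
    induction k with
    | zero => exact ⟨hm, List.Chain.nil⟩
    | succ k ih =>
      rw [haux_succ]
      exact (fairStep_good r C f hconn hsucc hclosed (aux k) ih).1
  have hsteps : ∀ k, r (aux k).1 (aux (k + 1)).1 := by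
    intro k
    rw [haux_succ]
    exact (fairStep_good r C f hconn hsucc hclosed (aux k) (hgood k)).2
  -- round progression
  have hround : ∀ j, ∃ k, j ≤ k ∧ (aux k).2 = ([], j) := by
    intro j
    induction j with
    | zero => exact ⟨0, le_refl _, rfl⟩
    | succ j ih =>
      obtain ⟨k, hkj, hk⟩ := ih
      have hk' : aux k = ((aux k).1, [], j) := by
        rw [← hk]
      set c := (aux k).1 with hc
      have hstep1 : aux (k + 1) = F (c, [], j) := by rw [haux_succ, hk']
      by_cases hpos : (f j).1 ∈ C ∧ r (f j).1 (f j).2 ∧ c ∈ C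
      · set q := pathTo r C hconn c (f j).1 ++ [(f j).2] with hq
        have hne : q ≠ [] := by simp [hq]
        have h1 : aux (k + 1) = (q.head hne, q.tail, j + 1) := by
          rw [hstep1, hF, fairStep_nil, dif_pos hpos]
        refine ⟨k + 1 + q.tail.length, by omega, ?_⟩
        have : aux (k + 1 + q.tail.length) = F^[q.tail.length] (aux (k + 1)) := by
          simp only [haux, add_comm (k+1) q.tail.length, Function.iterate_add_apply]
        rw [this, h1, fairStep_run r C f hconn hsucc q.tail.length _ _ _ (le_refl _)]
        simp
        omega
      · refine ⟨k + 1, by omega, ?_⟩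
        rw [hstep1, hF, fairStep_nil, dif_neg hpos]
  refine ⟨fun k => (aux k).1, by simp [haux], hsteps, fun k => (hgood k).1, ?_⟩
  intro u v hu hr N
  obtain ⟨j, hjN, hj⟩ := hfhit (u, v) N
  obtain ⟨k, hkj, hk⟩ := hround j
  have hk' : aux k = ((aux k).1, [], j) := by rw [← hk]
  set c := (aux k).1 with hc
  have hcC : c ∈ C := (hgood k).1
  have hpos : (f j).1 ∈ C ∧ r (f j).1 (f j).2 ∧ c ∈ C := by
    rw [hj]; exact ⟨hu, hr, hcC⟩
  set p := pathTo r C hconn c (f j).1 with hp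
  set q := p ++ [(f j).2] with hq
  have hne : q ≠ [] := by simp [hq]
  have h1 : aux (k + 1) = (q.head hne, q.tail, j + 1) := by
    rw [haux_succ, hk', hF, fairStep_nil, dif_pos hpos]
  -- values along the run
  have hlen : q.length = p.length + 1 := by simp [hq]
  have key : ∀ i, (hik : i ≤ q.length) → (aux (k + i)).1 = (c :: q)[i]'(by simp; omega) := by
    intro i hik
    match i with
    | 0 => simpa using hc.symm
    | i + 1 =>
      have : aux (k + (i + 1)) = F^[i] (aux (k + 1)) := by
        simp only [haux, show k + (i + 1) = i + (k + 1) by omega, Function.iterate_add_apply]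
      rw [this, h1, hF,
        fairStep_run r C f hconn hsucc i _ _ _ (by simp at hik ⊢; omega)]
      have hqe : q.head hne :: q.tail = q := List.cons_head_tail hne
      simp only
      have h3 : (q.head hne :: q.tail)[i]'(by rw [hqe]; omega)
          = (c :: q)[i + 1]'(by simp; omega) := by
        rw [List.getElem_cons_succ]
        exact List.getElem_of_eq hqe _
      exact h3
  obtain ⟨hchp, hlast⟩ := pathTo_spec r C hconn hcC hpos.1
  have hcq : c :: q = (c :: p) ++ [(f j).2] := by simp [hq]
  have hu' : (aux (k + p.length)).1 = u := by
    rw [key p.length (by omega)]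
    rw [List.getElem_of_eq hcq (by simp only [List.length_cons, hlen]; omega)]
    rw [List.getElem_append_left (by simp)]
    have h2 : (c :: p)[p.length]'(by simp) = (c :: p).getLast (cons_ne_nil _ _) :=
      (List.getLast_eq_getElem _).symm
    rw [h2, hlast, hj]
  have hv' : (aux (k + (p.length + 1))).1 = (f j).2 := by
    rw [key (p.length + 1) (by omega)]
    rw [List.getElem_of_eq hcq (by simp only [List.length_cons, hlen]; omega)]
    rw [List.getElem_append_right (by simp)]
    simp
  refine ⟨k + p.length, by omega, hu', ?_⟩
  show (aux (k + p.length + 1)).1 = v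
  rw [show k + p.length + 1 = k + (p.length + 1) from by omega, hv', hj]

/-- Conversely, if `π` is defined and applicable at every `π`-reachable
non-goal state (with goal states absorbing and `Fn a s` nonempty for applicable `a`),
and every fair infinite `π`-trajectory from `s₀` reaches a goal state, then `π` is a
strong cyclic solution. -/
theorem stmt13 {S Act : Type*} [Fintype S] (s₀ : S) (A : S → Set Act)
    (Fn : Act → S → Set S) (G : Set S) (π : S → Option Act)
    (hF : ∀ (a : Act) (s : S), a ∈ A s → (Fn a s).Nonempty)
    (habs : ∀ s ∈ G, π s = none)
    (happ : ∀ s, Relation.ReflTransGen (fondStep A Fn π) s₀ s → s ∉ G →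
      ∃ a, π s = some a ∧ a ∈ A s)
    (hfair : ∀ σ : ℕ → S, σ 0 = s₀ →
      (∀ i, fondStep A Fn π (σ i) (σ (i + 1))) →
      (∀ s s' : S, {i | σ i = s}.Infinite → fondStep A Fn π s s' →
        {i | σ i = s ∧ σ (i + 1) = s'}.Infinite) →
      ∃ i, σ i ∈ G) :
    strongCyclic s₀ A Fn G π := by
  classical
  intro s hs
  by_contra hcon
  push_neg at hcon
  -- every state reachable from `s` has a successor
  have hR : ∀ t, Relation.ReflTransGen (fondStep A Fn π) s t →
      ∃ t', fondStep A Fn π t t' := by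
    intro t ht
    have hst : Relation.ReflTransGen (fondStep A Fn π) s₀ t := hs.trans ht
    have htG : t ∉ G := fun hG => hcon t hG ht
    obtain ⟨a, ha, haA⟩ := happ t hst htG
    obtain ⟨t', ht'⟩ := hF a t haA
    exact ⟨t', a, ha, haA, ht'⟩
  -- a reachability-maximal state `m` reachable from `s`
  haveI htrans : IsTrans S (fun x y : S =>
      Relation.ReflTransGen (fondStep A Fn π) y x ∧
      ¬ Relation.ReflTransGen (fondStep A Fn π) x y) := ⟨by
    rintro x y z ⟨hyx, hxy⟩ ⟨hzy, hyz⟩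
    exact ⟨hzy.trans hyx, fun hxz => hyz (hyx.trans hxz)⟩⟩
  haveI hirr : IsIrrefl S (fun x y : S =>
      Relation.ReflTransGen (fondStep A Fn π) y x ∧
      ¬ Relation.ReflTransGen (fondStep A Fn π) x y) := ⟨by
    rintro x ⟨h1, h2⟩; exact h2 h1⟩
  have hwf := Finite.wellFounded_of_trans_of_irrefl (fun x y : S =>
      Relation.ReflTransGen (fondStep A Fn π) y x ∧
      ¬ Relation.ReflTransGen (fondStep A Fn π) x y)
  obtain ⟨m, hmR, hmax⟩ := hwf.has_min
    {t | Relation.ReflTransGen (fondStep A Fn π) s t} ⟨s, Relation.ReflTransGen.refl⟩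
  -- the strongly connected closed component of `m`
  have hmC : m ∈ {u : S | Relation.ReflTransGen (fondStep A Fn π) m u} :=
    Relation.ReflTransGen.refl
  have hCR : ∀ u ∈ {u : S | Relation.ReflTransGen (fondStep A Fn π) m u},
      Relation.ReflTransGen (fondStep A Fn π) s u := fun u hu => hmR.trans hu
  have hconn : ∀ u ∈ {u : S | Relation.ReflTransGen (fondStep A Fn π) m u},
      ∀ v ∈ {u : S | Relation.ReflTransGen (fondStep A Fn π) m u},
      Relation.ReflTransGen (fondStep A Fn π) u v := by
    intro u hu v hv
    have hum : Relation.ReflTransGen (fondStep A Fn π) u m := by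
      by_contra h
      exact hmax u (hCR u hu) ⟨hu, h⟩
    exact hum.trans hv
  have hclosed : ∀ u ∈ {u : S | Relation.ReflTransGen (fondStep A Fn π) m u},
      ∀ v, fondStep A Fn π u v → v ∈ {u : S | Relation.ReflTransGen (fondStep A Fn π) m u} :=
    fun u hu v hv => Relation.ReflTransGen.trans hu (Relation.ReflTransGen.single hv)
  have hsucc : ∀ c ∈ {u : S | Relation.ReflTransGen (fondStep A Fn π) m u},
      ∃ c', fondStep A Fn π c c' := fun c hc => hR c (hCR c hc)
  obtain ⟨τ, hτ0, hτstep, hτC, hτfair⟩ :=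
    fair_traj (fondStep A Fn π) {u : S | Relation.ReflTransGen (fondStep A Fn π) m u}
      hconn hclosed hsucc hmC
  -- prefix from s₀ to m
  obtain ⟨l, hl, hlast⟩ := List.exists_isChain_cons_of_relationReflTransGen (hs.trans hmR)
  set L := l.length with hL
  set σ : ℕ → S := fun i =>
    if h : i < L then (s₀ :: l)[i]'(by simp; omega) else τ (i - L) with hσ
  have hσ_le : ∀ i, (h : i ≤ L) → σ i = (s₀ :: l)[i]'(by simp; omega) := by
    intro i h
    rcases lt_or_eq_of_le h with h' | h'
    · simp only [hσ]; rw [dif_pos h']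
    · subst h'
      simp only [hσ]; rw [dif_neg (lt_irrefl _), Nat.sub_self, hτ0]
      have h2 := List.getLast_eq_getElem (l := s₀ :: l) (List.cons_ne_nil _ _)
      rw [hlast] at h2
      exact h2
  have hσ_ge : ∀ i, L ≤ i → σ i = τ (i - L) := by
    intro i h
    simp only [hσ]
    rw [dif_neg (by omega)]
  have hσ0 : σ 0 = s₀ := by rw [hσ_le 0 (Nat.zero_le _)]; simp
  have hσstep : ∀ i, fondStep A Fn π (σ i) (σ (i + 1)) := by
    intro i
    rcases lt_or_ge i L with h | h
    · rw [hσ_le i (by omega), hσ_le (i + 1) (by omega)]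
      exact List.isChain_iff_getElem.1 hl i (by simp; omega)
    · rw [hσ_ge i h, hσ_ge (i + 1) (by omega),
        show i + 1 - L = (i - L) + 1 from by omega]
      exact hτstep (i - L)
  have hfairness : ∀ t t' : S, {i | σ i = t}.Infinite → fondStep A Fn π t t' →
      {i | σ i = t ∧ σ (i + 1) = t'}.Infinite := by
    intro t t' hinf hst
    have htC : t ∈ {u : S | Relation.ReflTransGen (fondStep A Fn π) m u} := by
      obtain ⟨i, hi, hiL⟩ := hinf.exists_gt L
      simp only [Set.mem_setOf_eq] at hi
      rw [hσ_ge i (le_of_lt hiL)] at hi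
      rw [← hi]; exact hτC _
    apply Set.infinite_of_forall_exists_gt
    intro N
    obtain ⟨i, hiN, hit, hit'⟩ := hτfair t t' htC hst (N + 1)
    refine ⟨i + L, ⟨?_, ?_⟩, by omega⟩
    · rw [hσ_ge (i + L) (by omega)]; simpa using hit
    · rw [hσ_ge (i + L + 1) (by omega),
        show i + L + 1 - L = i + 1 from by omega]
      exact hit'
  obtain ⟨i, hiG⟩ := hfair σ hσ0 hσstep hfairness
  obtain ⟨a, ha, -⟩ := hσstep i
  rw [habs (σ i) hiG] at ha
  exact Option.some_ne_none a ha.symm
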